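/- Let p ∈ (0,1), q = 1 - p, and let k_0, k_1, ..., k_n be odd positive integers with k_0 = 1 and, for each i, k_{i+1} − k_i ∈ {0, 2} if k_i = 1 and k_{i+1} − k_i ∈ {−2, 2} otherwise. Then: (i) if (k_n − 1)/2 and n have the same parity, P(|V_{n+1}^p| = k_n + 2 | |V_i^p| = k_i, i = 0, ..., n) = (p^{(k_n+1)/2} + q^{(k_n+1)/2}) / (p^{(k_n−1)/2} + q^{(k_n−1)/2}); (ii) if (k_n − 1)/2 and n have opposite parity, this conditional probability equals (p^{(k_n+3)/2} + q^{(k_n+3)/2}) / (p^{(k_n+1)/2} + q^{(k_n+1)/2}). In particular, the conditional probability depends on the history only through k_n and n, so (|V_n^p|)_{n≥0} is a (non-homogeneous) Markov chain. -/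

import Mathlib

open MeasureTheory ProbabilityTheory Finset

/-- The distribution of a single increment of the Bernoulli random walk:
`+1` with probability `p` and `-1` with probability `1 - p`. -/
noncomputable def stepDist (p : ℝ) : Measure ℝ :=
  ENNReal.ofReal p • Measure.dirac 1 + ENNReal.ofReal (1 - p) • Measure.dirac (-1)

lemma stepDist_one (r : ℝ) : stepDist r {(1 : ℝ)} = ENNReal.ofReal r := by
  simp [stepDist, Measure.dirac_apply' _ (measurableSet_singleton _), Set.indicator]
  norm_num

lemma stepDist_neg_one (r : ℝ) : stepDist r {(-1 : ℝ)} = ENNReal.ofReal (1 - r) := by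
  simp [stepDist, Measure.dirac_apply' _ (measurableSet_singleton _), Set.indicator]
  norm_num

lemma stepDist_compl (r : ℝ) : stepDist r ({(1 : ℝ), (-1 : ℝ)}ᶜ) = 0 := by
  have hm : MeasurableSet (({(1 : ℝ), (-1 : ℝ)} : Set ℝ)ᶜ) :=
    (Set.Finite.measurableSet (by norm_num)).compl
  simp [stepDist, Measure.dirac_apply' _ hm, Set.indicator]


namespace DWAux

variable (k : ℕ → ℕ)

def pSign : ℕ → ℤ
  | 0 => 1
  | (i+1) => if k i = 1 ∧ k (i+1) = 1 then -(pSign i) else pSign i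

def pVal (i : ℕ) : ℤ := pSign k i * k i

def pStep (j : ℕ) : ℤ := if pVal k (j+1) = pVal k j + 2 then 1 else -1

def pC : ℕ → ℝ
  | 0 => 1
  | (j+1) => (pStep k j : ℝ)

lemma pSign_cases (i : ℕ) : pSign k i = 1 ∨ pSign k i = -1 := by
  induction i with
  | zero => left; rfl
  | succ i ih =>
    rcases ih with h | h <;> simp only [pSign] <;> split <;> omega

lemma abs_pVal (i : ℕ) : |pVal k i| = (k i : ℤ) := by
  rcases pSign_cases k i with h | h <;> simp [pVal, h]

lemma pStep_cases (j : ℕ) : pStep k j = 1 ∨ pStep k j = -1 := by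
  unfold pStep; split <;> simp

lemma pVal_step {n : ℕ}
    (hkstep : ∀ i, i + 1 ≤ n →
      (k i = 1 → (k (i + 1) = 1 ∨ k (i + 1) = 3)) ∧
      (k i ≠ 1 → ((k (i + 1) : ℤ) = (k i : ℤ) - 2 ∨ (k (i + 1) : ℤ) = (k i : ℤ) + 2)))
    (j : ℕ) (hj : j + 1 ≤ n) :
    pVal k (j+1) = pVal k j + 2 * pStep k j := by
  have H : pVal k (j+1) = pVal k j + 2 ∨ pVal k (j+1) = pVal k j - 2 := by
    by_cases h1 : k j = 1
    · rcases (hkstep j hj).1 h1 with h | h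
      · have hsgn : pSign k (j+1) = -(pSign k j) := by
          simp only [pSign]; rw [if_pos ⟨h1, h⟩]
        rcases pSign_cases k j with hs | hs <;>
          simp only [pVal, hsgn, hs, h1, h] <;> norm_num
      · have hsgn : pSign k (j+1) = pSign k j := by
          simp only [pSign]; rw [if_neg (by omega)]
        rcases pSign_cases k j with hs | hs <;>
          simp only [pVal, hsgn, hs, h1, h] <;> norm_num
    · have hsgn : pSign k (j+1) = pSign k j := by
        simp only [pSign]; rw [if_neg (by tauto)]
      rcases (hkstep j hj).2 h1 with h | h <;>
        rcases pSign_cases k j with hs | hs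
      · right; simp only [pVal, hsgn, hs, h]; ring
      · left; simp only [pVal, hsgn, hs, h]; ring
      · left; simp only [pVal, hsgn, hs, h]; ring
      · right; simp only [pVal, hsgn, hs, h]; ring
  unfold pStep; split
  · omega
  · omega


lemma abs_pVal_real (i : ℕ) : |((pVal k i : ℤ) : ℝ)| = (k i : ℝ) := by
  have := abs_pVal k i
  rw [← Int.cast_abs, this]
  push_cast
  rfl

lemma walk_eq {n : ℕ} (hk0 : k 0 = 1)
    (hstep : ∀ j, j + 1 ≤ n → pVal k (j+1) = pVal k j + 2 * pStep k j)
    (y : ℕ → ℝ) (σ : ℝ) :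
    ∀ m, m ≤ n → (∀ j, j ≤ m → y j = σ * pC k j) →
      y 0 + 2 * ∑ j ∈ Finset.range m, y (j+1) = σ * ((pVal k m : ℤ) : ℝ) := by
  intro m
  induction m with
  | zero =>
    intro _ h
    simp [h 0 (le_refl 0), pC, pVal, pSign, hk0]
  | succ m ih =>
    intro hm h
    have e1 := ih (by omega) (fun j hj => h j (by omega))
    have e2 := h (m+1) le_rfl
    have e3 := hstep m hm
    have hre : y 0 + 2 * ∑ j ∈ Finset.range (m+1), y (j+1)
        = (y 0 + 2 * ∑ j ∈ Finset.range m, y (j+1)) + 2 * y (m+1) := by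
      rw [Finset.sum_range_succ]; ring
    rw [hre, e1, e2, e3]
    show σ * ((pVal k m : ℤ) : ℝ) + 2 * (σ * ((pStep k m : ℤ) : ℝ)) = _
    push_cast
    ring

lemma char_backward {n : ℕ} (hk0 : k 0 = 1)
    (hstep : ∀ j, j + 1 ≤ n → pVal k (j+1) = pVal k j + 2 * pStep k j)
    (y : ℕ → ℝ) (σ : ℝ) (hσ : σ = 1 ∨ σ = -1)
    (hatom : ∀ j, j ≤ n → y j = σ * pC k j) :
    ∀ i, i ≤ n → |y 0 + 2 * ∑ j ∈ Finset.range i, y (j+1)| = (k i : ℝ) := by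
  intro i hi
  rw [walk_eq k hk0 hstep y σ i hi (fun j hj => hatom j (le_trans hj hi)), abs_mul]
  have hs1 : |σ| = 1 := by rcases hσ with h|h <;> rw [h] <;> norm_num
  rw [hs1, one_mul]
  exact abs_pVal_real k i

lemma char_forward {n : ℕ} (hk0 : k 0 = 1) (hkpos : ∀ i, i ≤ n → 0 < k i)
    (hstep : ∀ j, j + 1 ≤ n → pVal k (j+1) = pVal k j + 2 * pStep k j)
    (y : ℕ → ℝ) (hy : ∀ j, j ≤ n → y j = 1 ∨ y j = -1)
    (h : ∀ i, i ≤ n → |y 0 + 2 * ∑ j ∈ Finset.range i, y (j+1)| = (k i : ℝ)) :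
    ∀ m, m ≤ n → ∃ σ : ℝ, (σ = 1 ∨ σ = -1) ∧ ∀ j, j ≤ m → y j = σ * pC k j := by
  intro m
  induction m with
  | zero =>
    intro _
    refine ⟨y 0, hy 0 (by omega), ?_⟩
    intro j hj
    interval_cases j
    simp [pC]
  | succ m ih =>
    intro hm
    obtain ⟨σ, hσ, hatom⟩ := ih (by omega)
    have hW : y 0 + 2 * ∑ j ∈ Finset.range m, y (j+1) = σ * ((pVal k m : ℤ) : ℝ) :=
      walk_eq k hk0 hstep y σ m (by omega) hatom
    have habs := h (m+1) hm
    have hval : y 0 + 2 * ∑ j ∈ Finset.range (m+1), y (j+1)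
        = σ * ((pVal k m : ℤ) : ℝ) + 2 * y (m+1) := by
      rw [Finset.sum_range_succ, ← hW]; ring
    rw [hval] at habs
    have hy1 := hy (m+1) hm
    have hεZ := pStep_cases k m
    have hnew : y (m+1) = σ * ((pStep k m : ℤ) : ℝ) := by
      by_contra hne
      have hyv : y (m+1) = -(σ * ((pStep k m : ℤ) : ℝ)) := by
        rcases hσ with h'|h' <;> rcases hy1 with h''|h'' <;> rcases hεZ with h3|h3 <;>
          rw [h', h3] at hne ⊢ <;> rw [h''] at hne ⊢ <;> norm_num at hne <;> norm_num
      have h5 : |pVal k m - 2 * pStep k m| = (k (m+1) : ℤ) := by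
        have hcast : |σ * ((pVal k m : ℤ) : ℝ) + 2 * y (m+1)|
            = |(((pVal k m - 2 * pStep k m : ℤ) : ℤ) : ℝ)| := by
          rw [hyv]
          rcases hσ with h'|h' <;> rw [h'] <;> push_cast <;>
            [skip; rw [show -1 * ((pVal k m : ℤ) : ℝ) + 2 * -(-1 * ((pStep k m : ℤ) : ℝ))
              = -(((pVal k m : ℤ) : ℝ) - 2 * ((pStep k m : ℤ) : ℝ)) from by ring, abs_neg]] <;>
          ring_nf
        rw [hcast] at habs
        rw [← Int.cast_abs] at habs
        exact_mod_cast habs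
      have h6 : |pVal k m + 2 * pStep k m| = (k (m+1) : ℤ) := by
        have h7 := abs_pVal k (m+1)
        rw [hstep m hm] at h7
        exact h7
      have h8 : pVal k m ≠ 0 := by
        intro h0
        have h9 := abs_pVal k m
        rw [h0] at h9
        have := hkpos m (by omega)
        simp at h9
        omega
      have h10 := abs_eq_abs.mp (h5.trans h6.symm)
      rcases hεZ with h3|h3 <;> rw [h3] at h10 <;> omega
    refine ⟨σ, hσ, ?_⟩
    intro j hj
    rcases Nat.lt_or_ge j (m+1) with hj'|hj'
    · exact hatom j (by omega)
    · have hje : j = m+1 := by omega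
      subst hje
      simpa [pC] using hnew


end DWAux


/-- Conditional-probability computation for the walk `V^p_n = X_0 + 2 S^p_n` (modelled by
`Y 0 = X_0 ~ stepDist (1/2)` and increments `Y (i+1) ~ stepDist p`, all independent, so that
`V^p_n = Y 0 + 2 ∑_{1 ≤ i ≤ n} Y i`).  Let `p ∈ (0,1)`, `q = 1 - p`, and let
`k_0, …, k_n` be odd positive integers with `k_0 = 1` and, for each `i < n`,
`k_{i+1} − k_i ∈ {0, 2}` if `k_i = 1`, and `k_{i+1} − k_i ∈ {−2, 2}` otherwise.  Then:
(i) if `(k_n − 1)/2` and `n` have the same parity,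
`P(|V_{n+1}| = k_n + 2 ∣ |V_i| = k_i, i = 0,…,n)
  = (p^{(k_n+1)/2} + q^{(k_n+1)/2})/(p^{(k_n−1)/2} + q^{(k_n−1)/2})`;
(ii) if they have opposite parity, the conditional probability equals
`(p^{(k_n+3)/2} + q^{(k_n+3)/2})/(p^{(k_n+1)/2} + q^{(k_n+1)/2})`.
In particular it depends on the history only through `k_n` and `n`, so `(|V_n|)` is a
(non-homogeneous) Markov chain. -/
theorem doubled_walk_conditional_transition_probability
    {Ω : Type*} [MeasurableSpace Ω] (μ : Measure Ω) [IsProbabilityMeasure μ]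
    (p : ℝ) (hp0 : 0 < p) (hp1 : p < 1)
    (Y : ℕ → Ω → ℝ)
    (hYmeas : ∀ i, Measurable (Y i))
    (hYindep : iIndepFun Y μ)
    (hY0dist : Measure.map (Y 0) μ = stepDist (1/2))
    (hYdist : ∀ i, Measure.map (Y (i + 1)) μ = stepDist p)
    (n : ℕ) (k : ℕ → ℕ) (hk0 : k 0 = 1)
    (hkodd : ∀ i, i ≤ n → Odd (k i)) (hkpos : ∀ i, i ≤ n → 0 < k i)
    (hkstep : ∀ i, i + 1 ≤ n →
      (k i = 1 → (k (i + 1) = 1 ∨ k (i + 1) = 3)) ∧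
      (k i ≠ 1 → ((k (i + 1) : ℤ) = (k i : ℤ) - 2 ∨ (k (i + 1) : ℤ) = (k i : ℤ) + 2))) :
    (((k n - 1) / 2) % 2 = n % 2 →
      ProbabilityTheory.cond μ
          {ω | ∀ i, i ≤ n →
            |Y 0 ω + 2 * ∑ j ∈ Finset.range i, Y (j + 1) ω| = (k i : ℝ)}
          {ω | |Y 0 ω + 2 * ∑ j ∈ Finset.range (n + 1), Y (j + 1) ω| = (k n : ℝ) + 2}
        = ENNReal.ofReal
            ((p ^ ((k n + 1) / 2) + (1 - p) ^ ((k n + 1) / 2))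
              / (p ^ ((k n - 1) / 2) + (1 - p) ^ ((k n - 1) / 2)))) ∧
    (((k n - 1) / 2) % 2 ≠ n % 2 →
      ProbabilityTheory.cond μ
          {ω | ∀ i, i ≤ n →
            |Y 0 ω + 2 * ∑ j ∈ Finset.range i, Y (j + 1) ω| = (k i : ℝ)}
          {ω | |Y 0 ω + 2 * ∑ j ∈ Finset.range (n + 1), Y (j + 1) ω| = (k n : ℝ) + 2}
        = ENNReal.ofReal
            ((p ^ ((k n + 3) / 2) + (1 - p) ^ ((k n + 3) / 2))
              / (p ^ ((k n + 1) / 2) + (1 - p) ^ ((k n + 1) / 2)))) := by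
  classical
  have hq0 : (0:ℝ) < 1 - p := by linarith
  set q : ℝ := 1 - p with hqdef
  obtain ⟨m, hm⟩ := hkodd n le_rfl
  have hd1 : (k n - 1) / 2 = m := by omega
  have hd2 : (k n + 1) / 2 = m + 1 := by omega
  have hd3 : (k n + 3) / 2 = m + 2 := by omega
  have hstep : ∀ j, j + 1 ≤ n →
      DWAux.pVal k (j+1) = DWAux.pVal k j + 2 * DWAux.pStep k j :=
    DWAux.pVal_step k hkstep
  set A : Set Ω := {ω | ∀ i, i ≤ n →
      |Y 0 ω + 2 * ∑ j ∈ Finset.range i, Y (j + 1) ω| = (k i : ℝ)} with hAdef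
  set B : Set Ω := {ω | |Y 0 ω + 2 * ∑ j ∈ Finset.range (n + 1), Y (j + 1) ω|
      = (k n : ℝ) + 2} with hBdef
  set t : ℝ := if 0 < DWAux.pVal k n then 1 else -1 with htdef
  set cE : ℕ → ℝ := fun i => if i = n + 1 then t else DWAux.pC k i with hcEdef
  set g : ℝ → ℕ → Set Ω := fun σ i => Y i ⁻¹' {σ * cE i} with hgdef
  set E : ℝ → Set Ω := fun σ => ⋂ i ∈ Finset.range (n+1), g σ i with hEdef
  set F : ℝ → Set Ω := fun σ => ⋂ i ∈ Finset.range (n+2), g σ i with hFdef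
  set G : Set Ω := {ω | ∀ i, i ≤ n + 1 → (Y i ω = 1 ∨ Y i ω = -1)} with hGdef
  -- basic measurability
  have hWmeas : ∀ i, Measurable (fun ω => Y 0 ω + 2 * ∑ j ∈ Finset.range i, Y (j+1) ω) :=
    fun i => (hYmeas 0).add (measurable_const.mul
      (Finset.measurable_sum _ (fun j _ => hYmeas (j+1))))
  have hAmeas : MeasurableSet A := by
    have : A = ⋂ i, ⋂ (_ : i ≤ n),
        (fun ω => |Y 0 ω + 2 * ∑ j ∈ Finset.range i, Y (j+1) ω|) ⁻¹' {(k i : ℝ)} := by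
      ext ω; simp [hAdef, Set.mem_iInter]
    rw [this]
    exact MeasurableSet.iInter fun i => MeasurableSet.iInter fun _ =>
      ((hWmeas i).abs (measurableSet_singleton _))
  have hgmeas : ∀ σ i, MeasurableSet (g σ i) :=
    fun σ i => (hYmeas i) (measurableSet_singleton _)
  have hEmeas : ∀ σ, MeasurableSet (E σ) := fun σ =>
    MeasurableSet.biInter (Finset.range (n+1)).countable_toSet (fun i _ => hgmeas σ i)
  have hFmeas : ∀ σ, MeasurableSet (F σ) := fun σ =>
    MeasurableSet.biInter (Finset.range (n+2)).countable_toSet (fun i _ => hgmeas σ i)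
  -- independence: product formula
  have hprod : ∀ (σ : ℝ) (s : Finset ℕ), μ (⋂ i ∈ s, g σ i) = ∏ i ∈ s, μ (g σ i) :=
    fun σ s => hYindep.meas_biInter (fun i _ => ⟨{σ * cE i}, measurableSet_singleton _, rfl⟩)
  -- marginal singleton probabilities
  have hmap0 : ∀ c : ℝ, μ (Y 0 ⁻¹' {c}) = stepDist (1/2) {c} := fun c => by
    rw [← hY0dist, Measure.map_apply (hYmeas 0) (measurableSet_singleton _)]
  have hmap : ∀ i (c : ℝ), μ (Y (i+1) ⁻¹' {c}) = stepDist p {c} := fun i c => by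
    rw [← hYdist i, Measure.map_apply (hYmeas (i+1)) (measurableSet_singleton _)]
  -- null set
  have hGnull : μ Gᶜ = 0 := by
    have hsub : Gᶜ ⊆ ⋃ i, Y i ⁻¹' ({(1:ℝ), (-1:ℝ)}ᶜ) := by
      intro ω hω
      simp only [hGdef, Set.mem_compl_iff, Set.mem_setOf_eq, not_forall] at hω
      obtain ⟨i, hi, hbad⟩ := hω
      refine Set.mem_iUnion.mpr ⟨i, ?_⟩
      simp only [Set.mem_preimage, Set.mem_compl_iff, Set.mem_insert_iff,
        Set.mem_singleton_iff]
      tauto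
    refine measure_mono_null hsub (measure_iUnion_null ?_)
    intro i
    cases i with
    | zero =>
      have hmm : MeasurableSet (({(1:ℝ), (-1:ℝ)} : Set ℝ)ᶜ) :=
        (Set.Finite.measurableSet (by norm_num)).compl
      rw [← Measure.map_apply (hYmeas 0) hmm, hY0dist]
      exact stepDist_compl _
    | succ i =>
      have hmm : MeasurableSet (({(1:ℝ), (-1:ℝ)} : Set ℝ)ᶜ) :=
        (Set.Finite.measurableSet (by norm_num)).compl
      rw [← Measure.map_apply (hYmeas (i+1)) hmm, hYdist i]
      exact stepDist_compl _
  -- atom membership characterizations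
  have hcEval : ∀ j, j ≠ n + 1 → cE j = DWAux.pC k j := by
    intro j hj; simp only [hcEdef]; rw [if_neg hj]
  have hcEtop : cE (n+1) = t := by simp [hcEdef]
  have hmemE : ∀ (σ : ℝ) ω, ω ∈ E σ ↔ ∀ j, j ≤ n → Y j ω = σ * DWAux.pC k j := by
    intro σ ω
    simp only [hEdef, Set.mem_iInter, Finset.mem_range, hgdef, Set.mem_preimage,
      Set.mem_singleton_iff]
    constructor
    · intro h j hj
      rw [← hcEval j (by omega)]
      exact h j (by omega)
    · intro h i hi
      rw [hcEval i (by omega)]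
      exact h i (by omega)
  have hmemF : ∀ (σ : ℝ) ω, ω ∈ F σ ↔
      ((∀ j, j ≤ n → Y j ω = σ * DWAux.pC k j) ∧ Y (n+1) ω = σ * t) := by
    intro σ ω
    simp only [hFdef, Set.mem_iInter, Finset.mem_range, hgdef, Set.mem_preimage,
      Set.mem_singleton_iff]
    constructor
    · intro h
      refine ⟨fun j hj => ?_, ?_⟩
      · rw [← hcEval j (by omega)]; exact h j (by omega)
      · rw [← hcEtop]; exact h (n+1) (by omega)
    · rintro ⟨h1, h2⟩ i hi
      rcases Nat.lt_or_ge i (n+1) with hi'|hi'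
      · rw [hcEval i (by omega)]; exact h1 i (by omega)
      · have hie : i = n + 1 := by omega
        subst hie
        rw [hcEtop]; exact h2
  -- inclusions
  have hEsubA : ∀ σ : ℝ, (σ = 1 ∨ σ = -1) → E σ ⊆ A := by
    intro σ hσ ω hω
    have hatom := (hmemE σ ω).mp hω
    have hcb : ∀ i, i ≤ n → |Y 0 ω + 2 * ∑ j ∈ Finset.range i, Y (j+1) ω| = (k i : ℝ) :=
      DWAux.char_backward k hk0 hstep (fun j => Y j ω) σ hσ hatom
    simp only [hAdef, Set.mem_setOf_eq]
    exact hcb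
  have hAGsubE : A ∩ G ⊆ E 1 ∪ E (-1) := by
    rintro ω ⟨hωA, hωG⟩
    simp only [hAdef, Set.mem_setOf_eq] at hωA
    simp only [hGdef, Set.mem_setOf_eq] at hωG
    obtain ⟨σ, hσ, hatom⟩ := DWAux.char_forward k hk0 hkpos hstep (fun j => Y j ω)
      (fun j hj => hωG j (by omega)) hωA n le_rfl
    have hatom' : ∀ j, j ≤ n → Y j ω = σ * DWAux.pC k j := hatom
    rcases hσ with h|h
    · left; refine (hmemE 1 ω).mpr ?_; rw [← h]; exact hatom'
    · right; refine (hmemE (-1) ω).mpr ?_; rw [← h]; exact hatom'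
  have hWn1 : ∀ ω (σ : ℝ), (∀ j, j ≤ n → Y j ω = σ * DWAux.pC k j) →
      Y 0 ω + 2 * ∑ j ∈ Finset.range (n+1), Y (j+1) ω
        = σ * ((DWAux.pVal k n : ℤ) : ℝ) + 2 * Y (n+1) ω := by
    intro ω σ hatom
    have hw : Y 0 ω + 2 * ∑ j ∈ Finset.range n, Y (j+1) ω
        = σ * ((DWAux.pVal k n : ℤ) : ℝ) :=
      DWAux.walk_eq k hk0 hstep (fun j => Y j ω) σ n le_rfl hatom
    rw [Finset.sum_range_succ, mul_add, ← add_assoc, hw]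
  have hvabs := DWAux.abs_pVal k n
  have hkn : 0 < k n := hkpos n le_rfl
  have hvcase : DWAux.pVal k n = (k n : ℤ) ∨ DWAux.pVal k n = -(k n : ℤ) :=
    (abs_eq (by exact_mod_cast Nat.zero_le (k n))).mp hvabs
  have htcases : t = 1 ∨ t = -1 := by rw [htdef]; split <;> simp
  have hFsubAB : ∀ σ : ℝ, (σ = 1 ∨ σ = -1) → F σ ⊆ A ∩ B := by
    intro σ hσ ω hω
    obtain ⟨hatom, htop⟩ := (hmemF σ ω).mp hω
    refine ⟨hEsubA σ hσ ((hmemE σ ω).mpr hatom), ?_⟩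
    simp only [hBdef, Set.mem_setOf_eq]
    rw [hWn1 ω σ hatom, htop]
    have hfac : σ * ((DWAux.pVal k n : ℤ) : ℝ) + 2 * (σ * t)
        = σ * (((DWAux.pVal k n : ℤ) : ℝ) + 2 * t) := by ring
    have hs1 : |σ| = 1 := by rcases hσ with h|h <;> rw [h] <;> norm_num
    rw [hfac, abs_mul, hs1, one_mul]
    rcases lt_or_ge 0 (DWAux.pVal k n) with hv|hv
    · have ht1 : t = 1 := by rw [htdef, if_pos hv]
      have hveq : DWAux.pVal k n = (k n : ℤ) := by
        rcases hvcase with h|h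
        · exact h
        · exfalso; omega
      rw [ht1, hveq]
      have : ((((k n : ℤ)) : ℝ)) + 2 * 1 = (k n : ℝ) + 2 := by push_cast; ring
      rw [this]
      exact abs_of_nonneg (by positivity)
    · have ht2 : t = -1 := by rw [htdef, if_neg (by omega)]
      have hveq : DWAux.pVal k n = -(k n : ℤ) := by
        rcases hvcase with h|h
        · exfalso; omega
        · exact h
      rw [ht2, hveq]
      have : (((-(k n : ℤ)) : ℤ) : ℝ) + 2 * (-1) = -((k n : ℝ) + 2) := by push_cast; ring
      rw [this, abs_neg]
      exact abs_of_nonneg (by positivity)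
  have hABGsubF : A ∩ B ∩ G ⊆ F 1 ∪ F (-1) := by
    rintro ω ⟨⟨hωA, hωB⟩, hωG⟩
    simp only [hAdef, Set.mem_setOf_eq] at hωA
    simp only [hBdef, Set.mem_setOf_eq] at hωB
    simp only [hGdef, Set.mem_setOf_eq] at hωG
    obtain ⟨σ, hσ, hatom⟩ := DWAux.char_forward k hk0 hkpos hstep (fun j => Y j ω)
      (fun j hj => hωG j (by omega)) hωA n le_rfl
    have hatom' : ∀ j, j ≤ n → Y j ω = σ * DWAux.pC k j := hatom
    rw [hWn1 ω σ hatom'] at hωB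
    have hs1 : |σ| = 1 := by rcases hσ with h|h <;> rw [h] <;> norm_num
    have hyn1 := hωG (n+1) le_rfl
    have hknR : (1:ℝ) ≤ (k n : ℝ) := by exact_mod_cast hkn
    have htopeq : Y (n+1) ω = σ * t := by
      by_contra hne
      have hyv : Y (n+1) ω = -(σ * t) := by
        rcases hσ with h|h <;> rcases hyn1 with h2|h2 <;> rcases htcases with h3|h3 <;>
          rw [h, h3] at hne ⊢ <;> rw [h2] at hne ⊢ <;> norm_num at hne <;> norm_num
      rw [hyv] at hωB
      have hfac : σ * ((DWAux.pVal k n : ℤ) : ℝ) + 2 * (-(σ * t))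
          = σ * (((DWAux.pVal k n : ℤ) : ℝ) - 2 * t) := by ring
      rw [hfac, abs_mul, hs1, one_mul] at hωB
      rcases lt_or_ge 0 (DWAux.pVal k n) with hv|hv
      · have ht1 : t = 1 := by rw [htdef, if_pos hv]
        have hveq : DWAux.pVal k n = (k n : ℤ) := by
          rcases hvcase with h|h
          · exact h
          · exfalso; omega
        rw [ht1, hveq] at hωB
        have hx : ((((k n : ℤ)) : ℝ)) - 2 * 1 = (k n : ℝ) - 2 := by push_cast; ring
        rw [hx] at hωB
        rcases (abs_eq (by positivity)).mp hωB with h|h <;> linarith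
      · have ht2 : t = -1 := by rw [htdef, if_neg (by omega)]
        have hveq : DWAux.pVal k n = -(k n : ℤ) := by
          rcases hvcase with h|h
          · exfalso; omega
          · exact h
        rw [ht2, hveq] at hωB
        have hx : (((-(k n : ℤ)) : ℤ) : ℝ) - 2 * (-1) = -((k n : ℝ) - 2) := by push_cast; ring
        rw [hx, abs_neg] at hωB
        rcases (abs_eq (by positivity)).mp hωB with h|h <;> linarith
    rcases hσ with h|h
    · left; refine (hmemF 1 ω).mpr ?_; rw [← h]; exact ⟨hatom', htopeq⟩
    · right; refine (hmemF (-1) ω).mpr ?_; rw [← h]; exact ⟨hatom', htopeq⟩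
  -- disjointness
  have hpC0 : DWAux.pC k 0 = 1 := rfl
  have hEdisj : Disjoint (E 1) (E (-1)) := by
    rw [Set.disjoint_left]
    intro ω h1 h2
    have e1 := ((hmemE 1 ω).mp h1) 0 (by omega)
    have e2 := ((hmemE (-1) ω).mp h2) 0 (by omega)
    rw [e1, hpC0] at e2
    norm_num at e2
  have hFdisj : Disjoint (F 1) (F (-1)) := by
    rw [Set.disjoint_left]
    intro ω h1 h2
    have e1 := ((hmemF 1 ω).mp h1).1 0 (by omega)
    have e2 := ((hmemF (-1) ω).mp h2).1 0 (by omega)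
    rw [e1, hpC0] at e2
    norm_num at e2
  -- measures of A and A ∩ B
  have hμA : μ A = μ (E 1) + μ (E (-1)) := by
    have h1 : μ A = μ (E 1 ∪ E (-1)) := by
      apply le_antisymm
      · calc μ A = μ (A ∩ G) := (measure_inter_conull hGnull).symm
          _ ≤ μ (E 1 ∪ E (-1)) := measure_mono hAGsubE
      · exact measure_mono
          (Set.union_subset (hEsubA 1 (Or.inl rfl)) (hEsubA (-1) (Or.inr rfl)))
    rw [h1, measure_union hEdisj (hEmeas (-1))]
  have hμAB : μ (A ∩ B) = μ (F 1) + μ (F (-1)) := by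
    have h1 : μ (A ∩ B) = μ (F 1 ∪ F (-1)) := by
      apply le_antisymm
      · calc μ (A ∩ B) = μ (A ∩ B ∩ G) := (measure_inter_conull hGnull).symm
          _ ≤ μ (F 1 ∪ F (-1)) := measure_mono hABGsubF
      · exact measure_mono
          (Set.union_subset (hFsubAB 1 (Or.inl rfl)) (hFsubAB (-1) (Or.inr rfl)))
    rw [h1, measure_union hFdisj (hFmeas (-1))]
  -- counting
  obtain ⟨a, hadef⟩ : ∃ a, a = ((Finset.range n).filter (fun j => DWAux.pStep k j = 1)).card :=
    ⟨_, rfl⟩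
  obtain ⟨b, hbdef⟩ : ∃ b, b = ((Finset.range n).filter (fun j => ¬ DWAux.pStep k j = 1)).card :=
    ⟨_, rfl⟩
  have hab : a + b = n := by
    rw [hadef, hbdef, Finset.card_filter_add_card_filter_not, Finset.card_range]
  have hsum : DWAux.pVal k n = 1 + 2 * ((a:ℤ) - (b:ℤ)) := by
    have h0 : DWAux.pVal k 0 = 1 := by simp [DWAux.pVal, DWAux.pSign, hk0]
    have h1 : ∑ j ∈ Finset.range n, (DWAux.pVal k (j+1) - DWAux.pVal k j)
        = DWAux.pVal k n - DWAux.pVal k 0 := Finset.sum_range_sub _ n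
    have h2 : ∀ j ∈ Finset.range n, DWAux.pVal k (j+1) - DWAux.pVal k j
        = (if DWAux.pStep k j = 1 then (2:ℤ) else -2) := by
      intro j hj
      rw [Finset.mem_range] at hj
      have hst := hstep j (by omega)
      rcases DWAux.pStep_cases k j with h|h
      · rw [if_pos h]; omega
      · rw [if_neg (by omega)]; omega
    rw [Finset.sum_congr rfl h2, Finset.sum_ite, Finset.sum_const, Finset.sum_const,
      ← hadef, ← hbdef, h0] at h1
    simp only [nsmul_eq_mul] at h1
    omega
  -- single-coordinate measures
  have hgE0 : ∀ σ : ℝ, (σ = 1 ∨ σ = -1) → μ (g σ 0) = ENNReal.ofReal (1/2) := by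
    intro σ hσ
    have h0 : σ * cE 0 = σ := by rw [hcEval 0 (by omega), hpC0, mul_one]
    have hset : g σ 0 = Y 0 ⁻¹' {σ} := by simp only [hgdef, h0]
    rcases hσ with h|h
    · rw [hset, h, hmap0, stepDist_one]
    · rw [hset, h, hmap0, stepDist_neg_one]; norm_num
  have hcE1 : ∀ j, j < n → cE (j+1) = ((DWAux.pStep k j : ℤ) : ℝ) := by
    intro j hj
    rw [hcEval (j+1) (by omega)]
    rfl
  have hgE1 : ∀ j, j < n → μ (g 1 (j+1))
      = (if DWAux.pStep k j = 1 then ENNReal.ofReal p else ENNReal.ofReal q) := by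
    intro j hj
    have hμg : μ (g 1 (j+1)) = stepDist p {(1:ℝ) * cE (j+1)} := by
      simp only [hgdef]; exact hmap j _
    rcases DWAux.pStep_cases k j with h|h
    · have hx : (1:ℝ) * cE (j+1) = 1 := by rw [hcE1 j hj, h]; norm_num
      rw [if_pos h, hμg, hx, stepDist_one]
    · have hx : (1:ℝ) * cE (j+1) = -1 := by rw [hcE1 j hj, h]; norm_num
      rw [if_neg (by omega), hμg, hx, stepDist_neg_one, hqdef]
  have hgE2 : ∀ j, j < n → μ (g (-1) (j+1))
      = (if DWAux.pStep k j = 1 then ENNReal.ofReal q else ENNReal.ofReal p) := by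
    intro j hj
    have hμg : μ (g (-1) (j+1)) = stepDist p {(-1:ℝ) * cE (j+1)} := by
      simp only [hgdef]; exact hmap j _
    rcases DWAux.pStep_cases k j with h|h
    · have hx : (-1:ℝ) * cE (j+1) = -1 := by rw [hcE1 j hj, h]; norm_num
      rw [if_pos h, hμg, hx, stepDist_neg_one, hqdef]
    · have hx : (-1:ℝ) * cE (j+1) = 1 := by rw [hcE1 j hj, h]; norm_num
      rw [if_neg (by omega), hμg, hx, stepDist_one]
  -- product measures of the atoms
  have hμE1 : μ (E 1)
      = ENNReal.ofReal (1/2) * (ENNReal.ofReal p ^ a * ENNReal.ofReal q ^ b) := by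
    simp only [hEdef]
    rw [hprod 1 (Finset.range (n+1)), Finset.prod_range_succ', hgE0 1 (Or.inl rfl)]
    rw [Finset.prod_congr rfl (fun j hj => hgE1 j (Finset.mem_range.mp hj)),
      Finset.prod_ite, Finset.prod_const, Finset.prod_const, ← hadef, ← hbdef]
    ring
  have hμE2 : μ (E (-1))
      = ENNReal.ofReal (1/2) * (ENNReal.ofReal q ^ a * ENNReal.ofReal p ^ b) := by
    simp only [hEdef]
    rw [hprod (-1) (Finset.range (n+1)), Finset.prod_range_succ', hgE0 (-1) (Or.inr rfl)]
    rw [Finset.prod_congr rfl (fun j hj => hgE2 j (Finset.mem_range.mp hj)),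
      Finset.prod_ite, Finset.prod_const, Finset.prod_const, ← hadef, ← hbdef]
    ring
  have hμF : ∀ σ : ℝ, μ (F σ) = μ (E σ) * μ (Y (n+1) ⁻¹' {σ * t}) := by
    intro σ
    simp only [hFdef, hEdef]
    rw [hprod σ (Finset.range (n+2)), Finset.prod_range_succ, ← hprod σ (Finset.range (n+1))]
    congr 1
    simp only [hgdef, hcEtop]
  have hofE1 : μ (E 1) = ENNReal.ofReal (1/2 * (p^a * q^b)) := by
    rw [hμE1, ← ENNReal.ofReal_pow hp0.le, ← ENNReal.ofReal_pow hq0.le,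
      ← ENNReal.ofReal_mul (by positivity), ← ENNReal.ofReal_mul (by norm_num)]
  have hofE2 : μ (E (-1)) = ENNReal.ofReal (1/2 * (q^a * p^b)) := by
    rw [hμE2, ← ENNReal.ofReal_pow hq0.le, ← ENNReal.ofReal_pow hp0.le,
      ← ENNReal.ofReal_mul (by positivity), ← ENNReal.ofReal_mul (by norm_num)]
  have hcond : ProbabilityTheory.cond μ A B = (μ A)⁻¹ * μ (A ∩ B) := cond_apply hAmeas μ B
  have key : ∀ (X Z Num Den : ℝ), 0 < X → 0 < Den → Z * Den = Num * X →
      (ENNReal.ofReal X)⁻¹ * ENNReal.ofReal Z = ENNReal.ofReal (Num / Den) := by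
    intro X Z Num Den hX hDen hcross
    have h1 : Num / Den = Z / X := by
      rw [div_eq_div_iff hDen.ne' hX.ne']
      linarith
    rw [h1, ENNReal.ofReal_div_of_pos hX, div_eq_mul_inv, mul_comm]
  constructor
  · intro hpar
    rw [hd1] at hpar
    have hvpos : DWAux.pVal k n = (k n : ℤ) := by
      rcases hvcase with h|h
      · exact h
      · exfalso; rw [h] at hsum; omega
    have haeq : a = b + m := by rw [hvpos] at hsum; omega
    have ht1 : t = 1 := by rw [htdef, if_pos (by rw [hvpos]; exact_mod_cast hkn)]
    have hg1 : μ (Y (n+1) ⁻¹' {(1:ℝ) * t}) = ENNReal.ofReal p := by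
      rw [ht1, show (1:ℝ) * 1 = 1 by norm_num, hmap n 1, stepDist_one]
    have hg2 : μ (Y (n+1) ⁻¹' {(-1:ℝ) * t}) = ENNReal.ofReal q := by
      rw [ht1, show (-1:ℝ) * 1 = -1 by norm_num, hmap n (-1), stepDist_neg_one, hqdef]
    have hμF1 : μ (F 1) = ENNReal.ofReal (1/2 * (p^a*q^b) * p) := by
      rw [hμF 1, hg1, hofE1, ← ENNReal.ofReal_mul (by positivity)]
    have hμF2 : μ (F (-1)) = ENNReal.ofReal (1/2 * (q^a*p^b) * q) := by
      rw [hμF (-1), hg2, hofE2, ← ENNReal.ofReal_mul (by positivity)]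
    rw [hd2, hd1, hcond, hμA, hofE1, hofE2, hμAB, hμF1, hμF2,
      ← ENNReal.ofReal_add (by positivity) (by positivity),
      ← ENNReal.ofReal_add (by positivity) (by positivity)]
    exact key _ _ _ _ (by positivity) (by positivity) (by rw [haeq]; ring)
  · intro hpar
    rw [hd1] at hpar
    have hvneg : DWAux.pVal k n = -(k n : ℤ) := by
      rcases hvcase with h|h
      · exfalso; rw [h] at hsum; omega
      · exact h
    have hbeq : b = a + (m+1) := by rw [hvneg] at hsum; omega
    have ht2 : t = -1 := by rw [htdef, if_neg (by rw [hvneg]; omega)]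
    have hg1 : μ (Y (n+1) ⁻¹' {(1:ℝ) * t}) = ENNReal.ofReal q := by
      rw [ht2, show (1:ℝ) * (-1) = -1 by norm_num, hmap n (-1), stepDist_neg_one, hqdef]
    have hg2 : μ (Y (n+1) ⁻¹' {(-1:ℝ) * t}) = ENNReal.ofReal p := by
      rw [ht2, show (-1:ℝ) * (-1) = 1 by norm_num, hmap n 1, stepDist_one]
    have hμF1 : μ (F 1) = ENNReal.ofReal (1/2 * (p^a*q^b) * q) := by
      rw [hμF 1, hg1, hofE1, ← ENNReal.ofReal_mul (by positivity)]
    have hμF2 : μ (F (-1)) = ENNReal.ofReal (1/2 * (q^a*p^b) * p) := by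
      rw [hμF (-1), hg2, hofE2, ← ENNReal.ofReal_mul (by positivity)]
    rw [hd3, hd2, hcond, hμA, hofE1, hofE2, hμAB, hμF1, hμF2,
      ← ENNReal.ofReal_add (by positivity) (by positivity),
      ← ENNReal.ofReal_add (by positivity) (by positivity)]
    exact key _ _ _ _ (by positivity) (by positivity) (by rw [hbeq]; ring)
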